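/- Let H be a finite abelian group whose order is not a power of 2 (i.e., H is not a 2-group). If H does not have the periodic tiling (PT) property, then the group H × Z_2 does not have the periodic tiling (PT) property. -/

import Mathlib

/-- `(Ω, T)` is a tiling pair of the abelian group `G`: every element of `G`
has a unique representation `ω + t` with `ω ∈ Ω`, `t ∈ T`. -/
def IsTilingPair {G : Type*} [AddCommGroup G] (Ω T : Set G) : Prop :=
  ∀ g : G, ∃! p : G × G, p.1 ∈ Ω ∧ p.2 ∈ T ∧ p.1 + p.2 = g

/-- A nonempty subset `A` of `G` is periodic if `A + g = A` for some nonzero `g`. -/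
def IsPeriodic {G : Type*} [AddCommGroup G] (A : Set G) : Prop :=
  A.Nonempty ∧ ∃ g : G, g ≠ 0 ∧ (fun a => a + g) '' A = A

/-- `Ω` is a tile of `G` if it has a tiling complement. -/
def IsTile {G : Type*} [AddCommGroup G] (Ω : Set G) : Prop :=
  ∃ T : Set G, IsTilingPair Ω T

/-- `G` has the periodic tiling (PT) property: for every tiling pair `(Ω, T)`,
either `Ω` is periodic, or `T` can be replaced by a periodic tiling complement. -/
def HasPT (G : Type*) [AddCommGroup G] : Prop :=
  ∀ Ω T : Set G, IsTilingPair Ω T →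
    IsPeriodic Ω ∨ ∃ T' : Set G, IsPeriodic T' ∧ IsTilingPair Ω T'

/-- A tile `Ω` is uniformly periodic if all its tiling complements share a
common nonzero period. -/
def UniformlyPeriodic {G : Type*} [AddCommGroup G] (Ω : Set G) : Prop :=
  ∃ g : G, g ≠ 0 ∧ ∀ T : Set G, IsTilingPair Ω T → (fun t => t + g) '' T = T

/-- A tile `Ω` is dual uniformly periodic if there is a periodic tile `Ω'`
which is a tiling complement of every tiling complement of `Ω`. -/
def DualUniformlyPeriodic {G : Type*} [AddCommGroup G] (Ω : Set G) : Prop :=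
  ∃ Ω' : Set G, IsPeriodic Ω' ∧ IsTile Ω' ∧
    ∀ T : Set G, IsTilingPair Ω T → IsTilingPair Ω' T

/-- `G` has the uniformly periodic tiling (UPT) property: every tile of `G`
is either uniformly periodic or dual uniformly periodic. -/
def HasUPT (G : Type*) [AddCommGroup G] : Prop :=
  ∀ Ω : Set G, IsTile Ω → UniformlyPeriodic Ω ∨ DualUniformlyPeriodic Ω

def liftTile {H : Type*} [AddCommGroup H] (Ω : Set H) (a : H) : Set (H × ZMod 2) :=
  {x | (x.2 = 0 ∧ x.1 ∈ Ω) ∨ (x.2 = 1 ∧ x.1 - a ∈ Ω)}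

lemma zmod2_cases : ∀ e : ZMod 2, e = 0 ∨ e = 1 := by decide

lemma zmod2_ne : (0 : ZMod 2) ≠ 1 := by decide

lemma mem_liftTile {H : Type*} [AddCommGroup H] {Ω : Set H} {a : H} {x : H × ZMod 2} :
    x ∈ liftTile Ω a ↔ (x.2 = 0 ∧ x.1 ∈ Ω) ∨ (x.2 = 1 ∧ x.1 - a ∈ Ω) := Iff.rfl

lemma prod_sum_eq {H : Type*} [AddCommGroup H] {ω t h : H} {ε δ γ : ZMod 2}
    (h1 : ω + t = h) (h2 : ε + δ = γ) : ((ω, ε) : H × ZMod 2) + (t, δ) = (h, γ) := by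
  rw [Prod.mk_add_mk, h1, h2]

lemma prod_sub_eq {H : Type*} [AddCommGroup H] {ω t h : H} {ε δ γ : ZMod 2}
    (h1 : ω - t = h) (h2 : ε - δ = γ) : ((ω, ε) : H × ZMod 2) - (t, δ) = (h, γ) := by
  rw [Prod.mk_sub_mk, h1, h2]

lemma lift_pair {H : Type*} [AddCommGroup H] {Ω T : Set H} (a : H)
    (hpair : IsTilingPair Ω T) :
    IsTilingPair (liftTile Ω a) {x : H × ZMod 2 | x.2 = 0 ∧ x.1 ∈ T} := by
  rintro ⟨h, ε⟩
  rcases zmod2_cases ε with rfl | rfl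
  · obtain ⟨⟨ω, t⟩, ⟨hω, ht, hsum⟩, huniq⟩ := hpair h
    refine ⟨((ω, 0), (t, 0)), ⟨Or.inl ⟨rfl, hω⟩, ⟨rfl, ht⟩,
      prod_sum_eq hsum (by decide)⟩, ?_⟩
    rintro ⟨⟨ω₁, ε₁⟩, ⟨t₁, δ₁⟩⟩ ⟨hω₁, ⟨hδ₁, ht₁⟩, hsum₁⟩
    rw [mem_liftTile] at hω₁
    simp only [Set.mem_setOf_eq] at ht₁ hδ₁
    have h1 : ω₁ + t₁ = h := congrArg Prod.fst hsum₁
    have h2 : ε₁ + δ₁ = 0 := congrArg Prod.snd hsum₁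
    cases (show (δ₁ : ZMod 2) = 0 from hδ₁)
    have hε₁ : ε₁ = 0 := by simpa using h2
    cases hε₁
    rcases hω₁ with ⟨_, hω₁⟩ | ⟨h1', _⟩
    · have := huniq (ω₁, t₁) ⟨hω₁, ht₁, h1⟩
      obtain ⟨e1, e2⟩ := Prod.ext_iff.mp this
      simp only [Prod.mk.injEq]
      exact ⟨⟨e1, trivial⟩, e2, trivial⟩
    · exact absurd h1' zmod2_ne
  · obtain ⟨⟨ω, t⟩, ⟨hω, ht, hsum⟩, huniq⟩ := hpair (h - a)
    have hsum' : (ω + a) + t = h := by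
      rw [add_right_comm, hsum, sub_add_cancel]
    refine ⟨((ω + a, 1), (t, 0)), ⟨Or.inr ⟨rfl, by simpa using hω⟩, ⟨rfl, ht⟩,
      prod_sum_eq hsum' (by decide)⟩, ?_⟩
    rintro ⟨⟨ω₁, ε₁⟩, ⟨t₁, δ₁⟩⟩ ⟨hω₁, ⟨hδ₁, ht₁⟩, hsum₁⟩
    rw [mem_liftTile] at hω₁
    simp only [Set.mem_setOf_eq] at ht₁ hδ₁
    have h1 : ω₁ + t₁ = h := congrArg Prod.fst hsum₁
    have h2 : ε₁ + δ₁ = 1 := congrArg Prod.snd hsum₁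
    cases (show (δ₁ : ZMod 2) = 0 from hδ₁)
    have hε₁ : ε₁ = 1 := by simpa using h2
    cases hε₁
    rcases hω₁ with ⟨h1', _⟩ | ⟨_, hω₁⟩
    · exact absurd h1' zmod2_ne.symm
    · have hsub : (ω₁ - a) + t₁ = h - a := by rw [sub_add_eq_add_sub, h1]
      have := huniq (ω₁ - a, t₁) ⟨hω₁, ht₁, hsub⟩
      obtain ⟨e1, e2⟩ := Prod.ext_iff.mp this
      have e1' : ω₁ = ω + a := by
        have : ω₁ - a = ω := e1
        rw [← this, sub_add_cancel]
      simp only [Prod.mk.injEq]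
      exact ⟨⟨e1', trivial⟩, e2, trivial⟩

lemma caseA {H : Type*} [AddCommGroup H] {Ω : Set H} {a : H}
    (h2a : (2 : ℕ) • a ≠ 0) (hΩne : Ω.Nonempty)
    (hper : IsPeriodic (liftTile Ω a)) : IsPeriodic Ω := by
  obtain ⟨-, ⟨g, e⟩, hge, himg⟩ := hper
  have m1 : ∀ x ∈ liftTile Ω a, x + (g, e) ∈ liftTile Ω a := by
    intro x hx
    rw [← himg]
    exact ⟨x, hx, rfl⟩
  have m2 : ∀ x ∈ liftTile Ω a, x - (g, e) ∈ liftTile Ω a := by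
    intro x hx
    rw [← himg] at hx
    obtain ⟨y, hy, hxy⟩ := hx
    have : x - (g, e) = y := by
      rw [← hxy]
      exact add_sub_cancel_right y (g, e)
    rwa [this]
  rcases zmod2_cases e with rfl | rfl
  · -- period (g,0): Ω itself has period g
    have hg : g ≠ 0 := fun h => hge (by rw [h]; rfl)
    refine ⟨hΩne, g, hg, ?_⟩
    ext x
    constructor
    · rintro ⟨y, hy, rfl⟩
      have := m1 (y, 0) (Or.inl ⟨rfl, hy⟩)
      rcases this with ⟨_, h⟩ | ⟨h', _⟩
      · exact h
      · exact absurd h' zmod2_ne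
    · intro hx
      have := m2 (x, 0) (Or.inl ⟨rfl, hx⟩)
      rcases this with ⟨_, h⟩ | ⟨h', _⟩
      · exact ⟨x - g, h, by simp⟩
      · exact absurd h' zmod2_ne
  · -- period (g,1)
    have A1 : ∀ ω ∈ Ω, ω + (a + g) ∈ Ω := by
      intro ω hω
      have hmem : ((ω + a, 1) : H × ZMod 2) ∈ liftTile Ω a := Or.inr ⟨rfl, by simpa using hω⟩
      have := m1 _ hmem
      rcases this with ⟨_, h⟩ | ⟨h', _⟩
      · have : ω + a + g ∈ Ω := h
        rwa [add_assoc] at this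
      · exact absurd (show (1 + 1 : ZMod 2) = 1 from h') (by decide)
    have A2 : ∀ ω ∈ Ω, ω - g - a ∈ Ω := by
      intro ω hω
      have := m2 (ω, 0) (Or.inl ⟨rfl, hω⟩)
      rcases this with ⟨h', _⟩ | ⟨_, h⟩
      · exact absurd (show (0 - 1 : ZMod 2) = 0 from h') (by decide)
      · have : ω - g - a ∈ Ω := h
        exact this
    have A3 : ∀ ω ∈ Ω, ω + (g - a) ∈ Ω := by
      intro ω hω
      have := m1 (ω, 0) (Or.inl ⟨rfl, hω⟩)
      rcases this with ⟨h', _⟩ | ⟨_, h⟩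
      · exact absurd (show (0 + 1 : ZMod 2) = 0 from h') (by decide)
      · have : ω + g - a ∈ Ω := h
        rwa [add_sub_assoc] at this
    have A4 : ∀ ω ∈ Ω, ω + a - g ∈ Ω := by
      intro ω hω
      have hmem : ((ω + a, 1) : H × ZMod 2) ∈ liftTile Ω a := Or.inr ⟨rfl, by simpa using hω⟩
      have := m2 _ hmem
      rcases this with ⟨_, h⟩ | ⟨h', _⟩
      · exact h
      · exact absurd (show (1 - 1 : ZMod 2) = 1 from h') (by decide)
    by_cases hag : a + g = 0
    · -- g = -a; use period g - a = -2a
      have hga : g - a ≠ 0 := by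
        intro h
        apply h2a
        have hg : g = -a := eq_neg_of_add_eq_zero_right hag
        rw [hg] at h
        have : (2 : ℕ) • a = -(-a - a) := by
          rw [two_nsmul]; abel
        rw [this, h, neg_zero]
      refine ⟨hΩne, g - a, hga, ?_⟩
      ext x
      constructor
      · rintro ⟨y, hy, rfl⟩
        exact A3 y hy
      · intro hx
        refine ⟨x + a - g, A4 x hx, ?_⟩
        show x + a - g + (g - a) = x
        abel
    · refine ⟨hΩne, a + g, hag, ?_⟩
      ext x
      constructor
      · rintro ⟨y, hy, rfl⟩
        exact A1 y hy
      · intro hx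
        refine ⟨x - g - a, A2 x hx, ?_⟩
        show x - g - a + (a + g) = x
        abel

lemma pair4 {A B : Type*} {q q' : (A × B) × (A × B)} (h : q = q') :
    q.1.1 = q'.1.1 ∧ q.1.2 = q'.1.2 ∧ q.2.1 = q'.2.1 ∧ q.2.2 = q'.2.2 := by
  subst h; exact ⟨rfl, rfl, rfl, rfl⟩

lemma caseB0 {H : Type*} [AddCommGroup H] {Ω : Set H} {a g : H} {S : Set (H × ZMod 2)}
    (hg : g ≠ 0) (hSne : S.Nonempty)
    (hSpair : IsTilingPair (liftTile Ω a) S)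
    (himg : (fun x => x + ((g, 0) : H × ZMod 2)) '' S = S) :
    ∃ T', IsPeriodic T' ∧ IsTilingPair Ω T' := by
  have m1 : ∀ x ∈ S, x + ((g, 0) : H × ZMod 2) ∈ S := by
    intro x hx; rw [← himg]; exact ⟨x, hx, rfl⟩
  have m2 : ∀ x ∈ S, x - ((g, 0) : H × ZMod 2) ∈ S := by
    intro x hx
    rw [← himg] at hx
    obtain ⟨y, hy, hxy⟩ := hx
    have : x - ((g, 0) : H × ZMod 2) = y := by
      rw [← hxy]; exact add_sub_cancel_right y _
    rwa [this]
  refine ⟨{t : H | (t, 0) ∈ S ∨ (t - a, 1) ∈ S}, ⟨?_, g, hg, ?_⟩, ?_⟩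
  · -- nonempty
    obtain ⟨⟨s, δ⟩, hs⟩ := hSne
    rcases zmod2_cases δ with rfl | rfl
    · exact ⟨s, Or.inl hs⟩
    · refine ⟨s + a, Or.inr ?_⟩
      rwa [add_sub_cancel_right]
  · -- period g
    ext t
    constructor
    · rintro ⟨y, hy, rfl⟩
      rcases hy with hy | hy
      · exact Or.inl (m1 _ hy)
      · have := m1 _ hy
        have e : ((y - a, 1) : H × ZMod 2) + (g, 0) = (y + g - a, 1) := by
          rw [Prod.mk_add_mk, add_zero]
          congr 1
          abel
        rw [e] at this
        exact Or.inr this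
    · intro ht
      refine ⟨t - g, ?_, by simp⟩
      rcases ht with ht | ht
      · exact Or.inl (m2 _ ht)
      · have := m2 _ ht
        have e : ((t - a, 1) : H × ZMod 2) - (g, 0) = (t - g - a, 1) := by
          rw [Prod.mk_sub_mk, sub_zero]
          congr 1
          abel
        rw [e] at this
        exact Or.inr this
  · -- tiling pair
    intro h
    obtain ⟨⟨⟨ω₁, ε₁⟩, ⟨s₁, δ₁⟩⟩, ⟨hw, hs, hsum⟩, huniq⟩ := hSpair (h, 0)
    rw [mem_liftTile] at hw
    have h1 : ω₁ + s₁ = h := congrArg Prod.fst hsum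
    have h2 : ε₁ + δ₁ = 0 := congrArg Prod.snd hsum
    rcases hw with ⟨he, hω⟩ | ⟨he, hω⟩ <;> cases he
    · -- ε₁ = 0, δ₁ = 0
      have hδ : δ₁ = 0 := by rcases zmod2_cases δ₁ with rfl | rfl; exacts [rfl, absurd h2 (by decide)]
      cases hδ
      refine ⟨(ω₁, s₁), ⟨hω, Or.inl hs, h1⟩, ?_⟩
      rintro ⟨ω₂, t₂⟩ ⟨hω₂, ht₂, hsum₂⟩
      rcases ht₂ with ht₂ | ht₂
      · have := huniq ((ω₂, 0), (t₂, 0))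
          ⟨Or.inl ⟨rfl, hω₂⟩, ht₂, prod_sum_eq hsum₂ (by decide)⟩
        obtain ⟨e1, -, e3, -⟩ := pair4 this
        simp only [Prod.mk.injEq]
        exact ⟨e1, e3⟩
      · have hsum₃ : (ω₂ + a) + (t₂ - a) = h := by rw [← hsum₂]; abel
        have := huniq ((ω₂ + a, 1), (t₂ - a, 1))
          ⟨Or.inr ⟨rfl, by rwa [add_sub_cancel_right]⟩, ht₂, prod_sum_eq hsum₃ (by decide)⟩
        obtain ⟨-, e2, -, -⟩ := pair4 this
        exact absurd e2 zmod2_ne.symm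
    · -- ε₁ = 1, δ₁ = 1
      have hδ : δ₁ = 1 := by
        rcases zmod2_cases δ₁ with rfl | rfl
        · exact absurd h2 (by decide)
        · rfl
      cases hδ
      have hsum₄ : (ω₁ - a) + (s₁ + a) = h := by rw [← h1]; abel
      refine ⟨(ω₁ - a, s₁ + a), ⟨hω, Or.inr (by rwa [add_sub_cancel_right]), hsum₄⟩, ?_⟩
      rintro ⟨ω₂, t₂⟩ ⟨hω₂, ht₂, hsum₂⟩
      rcases ht₂ with ht₂ | ht₂
      · have := huniq ((ω₂, 0), (t₂, 0))
          ⟨Or.inl ⟨rfl, hω₂⟩, ht₂, prod_sum_eq hsum₂ (by decide)⟩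
        obtain ⟨-, e2, -, -⟩ := pair4 this
        exact absurd e2 zmod2_ne
      · have hsum₃ : (ω₂ + a) + (t₂ - a) = h := by rw [← hsum₂]; abel
        have := huniq ((ω₂ + a, 1), (t₂ - a, 1))
          ⟨Or.inr ⟨rfl, by rwa [add_sub_cancel_right]⟩, ht₂, prod_sum_eq hsum₃ (by decide)⟩
        obtain ⟨e1, -, e3, -⟩ := pair4 this
        have f1 : ω₂ = ω₁ - a := by
          have : ω₂ + a = ω₁ := e1
          rw [← this]; abel
        have f2 : t₂ = s₁ + a := by
          have : t₂ - a = s₁ := e3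
          rw [← this]; abel
        simp only [Prod.mk.injEq]
        exact ⟨f1, f2⟩

/-- `h` has a representation `ω + s` with `ω ∈ Ω` and `(s,0) ∈ S`. -/
abbrev tileP {H : Type*} [AddCommGroup H] (Ω : Set H) (S : Set (H × ZMod 2)) (h : H) : Prop :=
  ∃ ω ∈ Ω, ∃ s, (s, (0 : ZMod 2)) ∈ S ∧ ω + s = h

lemma caseB1 {H : Type*} [AddCommGroup H] {Ω : Set H} {a g : H} {p : ℕ} {S : Set (H × ZMod 2)}
    (hpodd : p % 2 = 1) (hpa : p • a = 0) (hSne : S.Nonempty)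
    (hSpair : IsTilingPair (liftTile Ω a) S)
    (himg : (fun x => x + ((g, 1) : H × ZMod 2)) '' S = S) :
    ∃ T', IsPeriodic T' ∧ IsTilingPair Ω T' := by
  have m1 : ∀ x ∈ S, x + ((g, 1) : H × ZMod 2) ∈ S := by
    intro x hx; rw [← himg]; exact ⟨x, hx, rfl⟩
  have m2 : ∀ x ∈ S, x - ((g, 1) : H × ZMod 2) ∈ S := by
    intro x hx
    rw [← himg] at hx
    obtain ⟨y, hy, hxy⟩ := hx
    have : x - ((g, 1) : H × ZMod 2) = y := by
      rw [← hxy]; exact add_sub_cancel_right y _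
    rwa [this]
  have f1 : ∀ s : H, (s, (0 : ZMod 2)) ∈ S → (s + g, (1 : ZMod 2)) ∈ S := by
    intro s hs
    have := m1 _ hs
    rwa [show ((s, (0 : ZMod 2)) : H × ZMod 2) + (g, 1) = (s + g, 1) from
      prod_sum_eq rfl (by decide)] at this
  have f2 : ∀ s : H, (s, (1 : ZMod 2)) ∈ S → (s + g, (0 : ZMod 2)) ∈ S := by
    intro s hs
    have := m1 _ hs
    rwa [show ((s, (1 : ZMod 2)) : H × ZMod 2) + (g, 1) = (s + g, 0) from
      prod_sum_eq rfl (by decide)] at this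
  have f3 : ∀ s : H, (s, (0 : ZMod 2)) ∈ S → (s - g, (1 : ZMod 2)) ∈ S := by
    intro s hs
    have := m2 _ hs
    rwa [show ((s, (0 : ZMod 2)) : H × ZMod 2) - (g, 1) = (s - g, 1) from
      prod_sub_eq rfl (by decide)] at this
  have f4 : ∀ s : H, (s, (1 : ZMod 2)) ∈ S → (s - g, (0 : ZMod 2)) ∈ S := by
    intro s hs
    have := m2 _ hs
    rwa [show ((s, (1 : ZMod 2)) : H × ZMod 2) - (g, 1) = (s - g, 0) from
      prod_sub_eq rfl (by decide)] at this
  -- existence of representations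
  have ex : ∀ h : H, tileP Ω S h ∨ ∃ ω ∈ Ω, ∃ s, (s, (0 : ZMod 2)) ∈ S ∧ ω + s + (a + g) = h := by
    intro h
    obtain ⟨⟨⟨ω₁, ε₁⟩, ⟨s₁, δ₁⟩⟩, ⟨hw, hs, hsum⟩, -⟩ := hSpair (h, 0)
    rw [mem_liftTile] at hw
    have h1 : ω₁ + s₁ = h := congrArg Prod.fst hsum
    have h2 : ε₁ + δ₁ = 0 := congrArg Prod.snd hsum
    rcases hw with ⟨he, hω⟩ | ⟨he, hω⟩ <;> cases he
    · have hδ : δ₁ = 0 := by rcases zmod2_cases δ₁ with rfl | rfl; exacts [rfl, absurd h2 (by decide)]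
      cases hδ
      exact Or.inl ⟨ω₁, hω, s₁, hs, h1⟩
    · have hδ : δ₁ = 1 := by
        rcases zmod2_cases δ₁ with rfl | rfl
        · exact absurd h2 (by decide)
        · rfl
      cases hδ
      exact Or.inr ⟨ω₁ - a, hω, s₁ - g, f4 _ hs, by rw [← h1]; abel⟩
  have notPQ : ∀ h : H, tileP Ω S h →
      (∃ ω ∈ Ω, ∃ s, (s, (0 : ZMod 2)) ∈ S ∧ ω + s + (a + g) = h) → False := by
    rintro h ⟨ω, hω, s, hs, hPsum⟩ ⟨ω', hω', s', hs', hQsum⟩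
    obtain ⟨q, -, huniq⟩ := hSpair (h, 0)
    have u1 := huniq ((ω, 0), (s, 0)) ⟨Or.inl ⟨rfl, hω⟩, hs, prod_sum_eq hPsum (by decide)⟩
    have u2 := huniq ((ω' + a, 1), (s' + g, 1))
      ⟨Or.inr ⟨rfl, by rwa [add_sub_cancel_right]⟩, f1 _ hs',
        prod_sum_eq (by rw [← hQsum]; abel) (by decide)⟩
    obtain ⟨-, e2, -, -⟩ := pair4 (u1.trans u2.symm)
    exact zmod2_ne e2
  have Puniq : ∀ ω s ω' s' : H, ω ∈ Ω → (s, (0 : ZMod 2)) ∈ S → ω' ∈ Ω →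
      (s', (0 : ZMod 2)) ∈ S → ω + s = ω' + s' → ω = ω' ∧ s = s' := by
    intro ω s ω' s' hω hs hω' hs' heq
    obtain ⟨q, -, huniq⟩ := hSpair (ω + s, 0)
    have u1 := huniq ((ω, 0), (s, 0)) ⟨Or.inl ⟨rfl, hω⟩, hs, prod_sum_eq rfl (by decide)⟩
    have u2 := huniq ((ω', 0), (s', 0)) ⟨Or.inl ⟨rfl, hω'⟩, hs', prod_sum_eq heq.symm (by decide)⟩
    obtain ⟨e1, -, e3, -⟩ := pair4 (u1.trans u2.symm)
    exact ⟨e1, e3⟩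
  have flip : ∀ h : H, tileP Ω S h ↔ ¬ tileP Ω S (h + (a + g)) := by
    intro h
    constructor
    · rintro ⟨ω, hω, s, hs, hPsum⟩ hP'
      exact notPQ (h + (a + g)) hP' ⟨ω, hω, s, hs, by rw [hPsum]⟩
    · intro hn
      rcases ex (h + (a + g)) with hP | hQ
      · exact absurd hP hn
      · obtain ⟨ω, hω, s, hs, heq⟩ := hQ
        exact ⟨ω, hω, s, hs, add_right_cancel heq⟩
  have flip' : ∀ h : H, tileP Ω S (h + (a + g)) ↔ ¬ tileP Ω S h :=
    fun h => ⟨fun hPc hPh => (flip h).mp hPh hPc,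
      fun hn => Classical.byContradiction fun hnc => hn ((flip h).mpr hnc)⟩
  have even2 : ∀ h : H, tileP Ω S (h + (a + g) + (a + g)) ↔ tileP Ω S h := by
    intro h
    rw [flip' (h + (a + g)), flip' h, not_not]
  have evenk : ∀ (k : ℕ) (h : H), tileP Ω S (h + (2 * k) • (a + g)) ↔ tileP Ω S h := by
    intro k
    induction k with
    | zero => intro h; simp
    | succ k ih =>
      intro h
      have e : h + (2 * (k + 1)) • (a + g) = (h + (a + g) + (a + g)) + (2 * k) • (a + g) := by
        rw [mul_add, add_nsmul, mul_one, two_nsmul]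
        abel
      rw [e, ih (h + (a + g) + (a + g)), even2]
  have key : ∀ h : H, tileP Ω S (h + p • g) ↔ ¬ tileP Ω S h := by
    intro h
    obtain ⟨m, hm⟩ : ∃ m, p = 2 * m + 1 := ⟨p / 2, by omega⟩
    have hpc : p • (a + g) = p • g := by rw [nsmul_add, hpa, zero_add]
    have e : h + p • g = (h + (2 * m) • (a + g)) + (a + g) := by
      rw [← hpc, hm, add_nsmul, one_nsmul]
      abel
    rw [e, flip' (h + (2 * m) • (a + g)), evenk m h]
  have clplus : ∀ (k : ℕ) (s : H), (s, (0 : ZMod 2)) ∈ S →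
      (s + k • (g + g), (0 : ZMod 2)) ∈ S := by
    intro k
    induction k with
    | zero => intro s hs; simpa using hs
    | succ k ih =>
      intro s hs
      have h1 := f2 _ (f1 _ hs)
      have := ih _ h1
      rwa [show s + g + g + k • (g + g) = s + (k + 1) • (g + g) by
        rw [succ_nsmul]; abel] at this
  have clminus : ∀ (k : ℕ) (s : H), (s, (0 : ZMod 2)) ∈ S →
      (s - k • (g + g), (0 : ZMod 2)) ∈ S := by
    intro k
    induction k with
    | zero => intro s hs; simpa using hs
    | succ k ih =>
      intro s hs
      have h1 := f4 _ (f3 _ hs)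
      have := ih _ h1
      rwa [show s - g - g - k • (g + g) = s - (k + 1) • (g + g) by
        rw [succ_nsmul]; abel] at this
  have hgg : ∀ s : H, (s, (0 : ZMod 2)) ∈ S → (s + p • g + p • g, (0 : ZMod 2)) ∈ S := by
    intro s hs
    have := clplus p s hs
    rwa [show s + p • (g + g) = s + p • g + p • g by rw [nsmul_add]; abel] at this
  have hgg' : ∀ s : H, (s, (0 : ZMod 2)) ∈ S → (s - p • g - p • g, (0 : ZMod 2)) ∈ S := by
    intro s hs
    have := clminus p s hs
    rwa [show s - p • (g + g) = s - p • g - p • g by rw [nsmul_add]; abel] at this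
  by_cases hg' : p • g = 0
  · exfalso
    have := key 0
    rw [hg', add_zero] at this
    exact iff_not_self this
  · refine ⟨{t : H | (t, (0 : ZMod 2)) ∈ S ∨ (t + p • g, (0 : ZMod 2)) ∈ S}, ⟨?_, p • g, hg', ?_⟩, ?_⟩
    · -- nonempty
      obtain ⟨⟨s, δ⟩, hs⟩ := hSne
      rcases zmod2_cases δ with rfl | rfl
      · exact ⟨s, Or.inl hs⟩
      · exact ⟨s + g, Or.inl (f2 _ hs)⟩
    · -- period p • g
      ext t
      constructor
      · rintro ⟨y, hy, rfl⟩
        rcases hy with hy | hy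
        · exact Or.inr (hgg _ hy)
        · exact Or.inl hy
      · intro ht
        refine ⟨t - p • g, ?_, by simp⟩
        rcases ht with ht | ht
        · refine Or.inr ?_
          rwa [sub_add_cancel]
        · refine Or.inl ?_
          have := hgg' _ ht
          rwa [show t + p • g - p • g - p • g = t - p • g by abel] at this
    · -- tiling pair
      intro h
      by_cases hPh : tileP Ω S h
      · obtain ⟨ω, hω, s, hs, heq⟩ := hPh
        refine ⟨(ω, s), ⟨hω, Or.inl hs, heq⟩, ?_⟩
        rintro ⟨ω₂, t₂⟩ ⟨hω₂, ht₂, hsum₂⟩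
        rcases ht₂ with ht₂ | ht₂
        · obtain ⟨e1, e2⟩ := Puniq ω₂ t₂ ω s hω₂ ht₂ hω hs (hsum₂.trans heq.symm)
          simp only [Prod.mk.injEq]
          exact ⟨e1, e2⟩
        · exfalso
          have hPg : tileP Ω S (h + p • g) :=
            ⟨ω₂, hω₂, t₂ + p • g, ht₂, by rw [← hsum₂]; abel⟩
          exact (key h).mp hPg ⟨ω, hω, s, hs, heq⟩
      · have hPg : tileP Ω S (h + p • g) := (key h).mpr hPh
        obtain ⟨ω, hω, s, hs, heq⟩ := hPg
        have hmem : (s - p • g) + p • g = s := by abel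
        refine ⟨(ω, s - p • g), ⟨hω, Or.inr (by rwa [hmem]), ?_⟩, ?_⟩
        · have : ω + (s - p • g) = ω + s - p • g := by abel
          rw [this, heq]
          exact add_sub_cancel_right h _
        · rintro ⟨ω₂, t₂⟩ ⟨hω₂, ht₂, hsum₂⟩
          rcases ht₂ with ht₂ | ht₂
          · exact absurd ⟨ω₂, hω₂, t₂, ht₂, hsum₂⟩ hPh
          · have hsum₃ : ω₂ + (t₂ + p • g) = h + p • g := by rw [← hsum₂]; abel
            obtain ⟨e1, e2⟩ := Puniq ω₂ (t₂ + p • g) ω s hω₂ ht₂ hω hs (hsum₃.trans heq.symm)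
            simp only [Prod.mk.injEq]
            exact ⟨e1, by rw [← e2]; abel⟩

/-- If `H` is not a 2-group and does not have the PT property, then
`H × Z_2` does not have the PT property. -/
theorem not_hasPT_prod_two (H : Type*) [AddCommGroup H] [Fintype H]
    (h2 : ¬ ∃ k : ℕ, Fintype.card H = 2 ^ k) (hH : ¬ HasPT H) :
    ¬ HasPT (H × ZMod 2) := by
  intro hPT
  unfold HasPT at hH
  push_neg at hH
  obtain ⟨Ω, T, hpair, hΩnp, hT'⟩ := hH
  have hcard0 : Fintype.card H ≠ 0 := Fintype.card_ne_zero
  obtain ⟨q, hq, hqdvd, hqodd⟩ : ∃ q : ℕ, q.Prime ∧ q ∣ Fintype.card H ∧ q % 2 = 1 := by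
    by_contra hqq
    push_neg at hqq
    apply h2
    refine ⟨(Fintype.card H).primeFactorsList.length, ?_⟩
    apply Nat.eq_prime_pow_of_unique_prime_dvd hcard0
    intro d hd hdvd
    rcases hd.eq_two_or_odd with h | h
    · exact h
    · exact absurd h (hqq d hd hdvd)
  haveI : Fact q.Prime := ⟨hq⟩
  obtain ⟨a, ha⟩ := exists_prime_addOrderOf_dvd_card q hqdvd
  have hpa : q • a = 0 := by rw [← ha]; exact addOrderOf_nsmul_eq_zero a
  have h2a : (2 : ℕ) • a ≠ 0 := by
    intro hh
    have hdvd2 : addOrderOf a ∣ 2 := addOrderOf_dvd_of_nsmul_eq_zero hh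
    rw [ha] at hdvd2
    have := (Nat.prime_dvd_prime_iff_eq hq Nat.prime_two).mp hdvd2
    omega
  have hΩne : Ω.Nonempty := by
    obtain ⟨⟨ω, t⟩, ⟨hω, -, -⟩, -⟩ := hpair 0
    exact ⟨ω, hω⟩
  have hlift := lift_pair a hpair
  rcases hPT _ _ hlift with hper | ⟨S, hSper, hSpair⟩
  · exact hΩnp (caseA h2a hΩne hper)
  · obtain ⟨hSne, ⟨g, e⟩, hge, himg⟩ := hSper
    rcases zmod2_cases e with rfl | rfl
    · have hg : g ≠ 0 := fun hh => hge (by rw [hh]; rfl)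
      obtain ⟨T', hT'per, hT'pair⟩ := caseB0 hg hSne hSpair himg
      exact hT' T' hT'per hT'pair
    · obtain ⟨T', hT'per, hT'pair⟩ := caseB1 hqodd hpa hSne hSpair himg
      exact hT' T' hT'per hT'pair
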